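/- Let G_0 be the minimal subset of c_00(ℕ) that contains {±e_n* : n ∈ ℕ}, is closed under the operations f_1 < … < f_d ↦ (1/m_{2j}) ∑_{i=1}^{d} f_i for d ≤ n_{2j} (for each j), and contains all ∑_{i=1}^d a_i f_i with rational a_i, ∑ a_i² ≤ 1, and f_i ∈ G_0 functionals with pairwise different weights. Then for every f ∈ G_0 and every subset E ⊂ ℕ, the restriction Ef (pointwise product with the characteristic function of E) also belongs to G_0. Consequently the unit vectors (e_n) form a 1-unconditional basis of the completion 𝔛_{G_0} of (c_00(ℕ), ‖·‖_{G_0}), where ‖x‖_{G_0} = sup{|f(x)| : f ∈ G_0}. -/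

import Mathlib

open scoped Classical

/-- `m_j = 2^(8·5^(j-1))`, i.e. `m 1 = 2^8`, `m (j+1) = m j ^ 5`. -/
def mseq (j : ℕ) : ℕ := 2 ^ (8 * 5 ^ (j - 1))

/-- `n 1 = 2^7`, `n (j+1) = (2 n j) ^ (log₂ (m (j+1)^4))`, where
`log₂ (m (j+2)^4) = 32·5^(j+1)`. -/
def nseq : ℕ → ℕ
  | 0 => 2 ^ 7
  | 1 => 2 ^ 7
  | j + 2 => (2 * nseq (j + 1)) ^ (32 * 5 ^ (j + 1))

/-- `f 0 < f 1 < … < f (d-1)`: successive supports. -/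
def Succ (f : ℕ → ℕ →₀ ℝ) (d : ℕ) : Prop :=
  ∀ i k, i < k → k < d → ∀ a ∈ (f i).support, ∀ b ∈ (f k).support, a < b

/-- The norming set `G₀`: the minimal subset of `c₀₀(ℕ)` containing `±e_n*`, closed
under the `(𝒜_{n_{2j}}, 1/m_{2j})` operations, and containing all rational
`ℓ²`-combinations of functionals of `G₀` with pairwise different weights. -/
inductive G0 : (ℕ →₀ ℝ) → Prop
  | basic (k : ℕ) : G0 (Finsupp.single k 1)
  | neg (f : ℕ →₀ ℝ) : G0 f → G0 (-f)
  | even (j d : ℕ) (f : ℕ → ℕ →₀ ℝ) (hj : 1 ≤ j) (hd : d ≤ nseq (2 * j))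
      (hG : ∀ i < d, G0 (f i)) (hs : Succ f d) :
      G0 ((mseq (2 * j) : ℝ)⁻¹ • ∑ i ∈ Finset.range d, f i)
  | comb (d : ℕ) (a : ℕ → ℚ) (j : ℕ → ℕ) (d' : ℕ → ℕ) (g : ℕ → ℕ → ℕ →₀ ℝ)
      (ha : ∑ i ∈ Finset.range d, (a i) ^ 2 ≤ 1)
      (hj : ∀ i < d, 1 ≤ j i)
      (hd' : ∀ i < d, d' i ≤ nseq (2 * j i))
      (hG : ∀ i l, i < d → l < d' i → G0 (g i l))
      (hs : ∀ i < d, Succ (g i) (d' i))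
      (hinj : ∀ i k, i < d → k < d → i ≠ k → j i ≠ j k) :
      G0 (∑ i ∈ Finset.range d, (a i : ℝ) •
        ((mseq (2 * j i) : ℝ)⁻¹ • ∑ l ∈ Finset.range (d' i), g i l))

/-- The action of a functional `f` on `x` via the inner product. -/
def dotp (f x : ℕ →₀ ℝ) : ℝ := ∑ k ∈ x.support, f k * x k

/-- The norm induced by `G₀` on `c₀₀(ℕ)`. -/
noncomputable def normG0 (x : ℕ →₀ ℝ) : ℝ :=
  sSup {r : ℝ | ∃ f, G0 f ∧ r = |dotp f x|}

lemma G0_zero : G0 0 := by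
  have h := G0.comb 0 (fun _ => 0) (fun _ => 1) (fun _ => 0) (fun _ _ => 0)
    (by simp) (fun i hi => absurd hi (by omega)) (fun i hi => absurd hi (by omega))
    (fun i l hi _ => absurd hi (by omega)) (fun i hi => absurd hi (by omega))
    (fun i k hi _ _ => absurd hi (by omega))
  simpa using h

lemma filter_neg (p : ℕ → Prop) (f : ℕ →₀ ℝ) :
    (-f).filter p = -(f.filter p) := by
  ext k; by_cases h : p k <;> simp [Finsupp.filter_apply, h]

lemma filter_smul (p : ℕ → Prop) (c : ℝ) (f : ℕ →₀ ℝ) :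
    (c • f).filter p = c • (f.filter p) := by
  ext k; by_cases h : p k <;> simp [Finsupp.filter_apply, h]

lemma filter_sum (p : ℕ → Prop) (s : Finset ℕ) (f : ℕ → ℕ →₀ ℝ) :
    (∑ i ∈ s, f i).filter p = ∑ i ∈ s, (f i).filter p := by
  ext k
  by_cases h : p k <;>
    simp [Finsupp.filter_apply, Finsupp.finset_sum_apply, h]

lemma Succ.filter {f : ℕ → ℕ →₀ ℝ} {d : ℕ} (hs : Succ f d) (p : ℕ → Prop) :
    Succ (fun i => (f i).filter p) d := by
  intro i k hik hkd a ha b hb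
  simp only [Finsupp.support_filter, Finset.mem_filter] at ha hb
  exact hs i k hik hkd a ha.1 b hb.1

lemma G0_filter (f : ℕ →₀ ℝ) (hf : G0 f) (p : ℕ → Prop) : G0 (f.filter p) := by
  induction hf with
  | basic k =>
    by_cases h : p k
    · rw [Finsupp.filter_single_of_pos _ h]; exact G0.basic k
    · rw [Finsupp.filter_single_of_neg _ h]; exact G0_zero
  | neg f hf ih => rw [filter_neg]; exact G0.neg _ ih
  | even j d f hj hd hG hs ih =>
    rw [filter_smul, filter_sum]
    exact G0.even j d (fun i => (f i).filter p) hj hd ih (hs.filter p)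
  | comb d a j d' g ha hj hd' hG hs hinj ih =>
    rw [filter_sum]
    simp only [filter_smul, filter_sum]
    exact G0.comb d a j d' (fun i l => (g i l).filter p) ha hj hd' ih
      (fun i hi => (hs i hi).filter p) hinj

lemma sum_abs_le_one {s : Finset ℕ} {v : ℕ → ℝ} (h1 : ∀ i ∈ s, |v i| ≤ 1)
    (h2 : ∀ i ∈ s, ∀ k ∈ s, i ≠ k → v i = 0 ∨ v k = 0) :
    |∑ i ∈ s, v i| ≤ 1 := by
  by_cases h : ∃ i ∈ s, v i ≠ 0
  · obtain ⟨i0, hi0, hv⟩ := h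
    rw [Finset.sum_eq_single_of_mem i0 hi0
      (fun b hb hne => (h2 b hb i0 hi0 hne).resolve_right hv)]
    exact h1 i0 hi0
  · push_neg at h
    rw [Finset.sum_eq_zero h]; simp

lemma succ_disj {f : ℕ → ℕ →₀ ℝ} {d : ℕ} (hs : Succ f d) {i i' : ℕ}
    (hi : i < d) (hi' : i' < d) (hne : i ≠ i') (k : ℕ) :
    f i k = 0 ∨ f i' k = 0 := by
  by_contra h
  push_neg at h
  have h1 : k ∈ (f i).support := Finsupp.mem_support_iff.2 h.1
  have h2 : k ∈ (f i').support := Finsupp.mem_support_iff.2 h.2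
  rcases Nat.lt_or_ge i i' with hlt | hge
  · exact absurd (hs i i' hlt hi' k h1 k h2) (lt_irrefl k)
  · have hlt : i' < i := by omega
    exact absurd (hs i' i hlt hi k h2 k h1) (lt_irrefl k)

lemma one_le_mseq (j : ℕ) : 1 ≤ mseq j := Nat.one_le_two_pow

lemma two_pow_le_mseq (j : ℕ) : 2 ^ j ≤ mseq (2 * j) := by
  unfold mseq
  apply Nat.pow_le_pow_right (by norm_num)
  have h5 : 2 * j - 1 < 5 ^ (2 * j - 1) := Nat.lt_pow_self (by norm_num)
  set t := 5 ^ (2 * j - 1)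
  omega

lemma mseq_inv_le (j : ℕ) : (mseq (2 * j) : ℝ)⁻¹ ≤ (1 / 2 : ℝ) ^ j := by
  have h : (2 : ℝ) ^ j ≤ (mseq (2 * j) : ℝ) := by
    exact_mod_cast two_pow_le_mseq j
  have h2 : ((mseq (2 * j) : ℝ))⁻¹ ≤ ((2 : ℝ) ^ j)⁻¹ :=
    inv_anti₀ (by positivity) h
  calc (mseq (2 * j) : ℝ)⁻¹ ≤ ((2 : ℝ) ^ j)⁻¹ := h2
    _ = (1 / 2 : ℝ) ^ j := by rw [one_div, inv_pow]

lemma geo_sum_le {S : Finset ℕ} (hS : ∀ t ∈ S, 1 ≤ t) :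
    ∑ t ∈ S, ((1 : ℝ) / 2) ^ t ≤ 1 := by
  obtain ⟨N, hN⟩ := S.exists_nat_subset_range
  have hsub : S ⊆ (Finset.range (N + 1)).erase 0 := by
    intro t ht
    refine Finset.mem_erase.2 ⟨by have := hS t ht; omega, ?_⟩
    have := Finset.mem_range.1 (hN ht)
    exact Finset.mem_range.2 (by omega)
  calc ∑ t ∈ S, ((1 : ℝ) / 2) ^ t
      ≤ ∑ t ∈ (Finset.range (N + 1)).erase 0, ((1 : ℝ) / 2) ^ t :=
        Finset.sum_le_sum_of_subset_of_nonneg hsub (fun t _ _ => by positivity)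
    _ = (∑ t ∈ Finset.range (N + 1), ((1 : ℝ) / 2) ^ t) - ((1 : ℝ) / 2) ^ 0 :=
        Finset.sum_erase_eq_sub (Finset.mem_range.2 (by omega))
    _ ≤ 2 - 1 := by
        have := sum_geometric_two_le (N + 1)
        simp only [pow_zero]
        linarith
    _ = 1 := by norm_num

lemma G0_bound (f : ℕ →₀ ℝ) (hf : G0 f) : ∀ k, |f k| ≤ 1 := by
  induction hf with
  | basic n => intro k; rw [Finsupp.single_apply]; split <;> simp
  | neg f hf ih => intro k; simpa using ih k
  | even j d f hj hd hG hs ih =>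
    intro k
    rw [Finsupp.smul_apply, Finsupp.finset_sum_apply, smul_eq_mul, abs_mul]
    have h1 : |∑ i ∈ Finset.range d, f i k| ≤ 1 :=
      sum_abs_le_one (fun i hi => ih i (Finset.mem_range.1 hi) k)
        (fun i hi i' hi' hne =>
          succ_disj hs (Finset.mem_range.1 hi) (Finset.mem_range.1 hi') hne k)
    have h2 : |(mseq (2 * j) : ℝ)⁻¹| ≤ 1 := by
      rw [abs_inv, Nat.abs_cast]
      apply inv_le_one_of_one_le₀
      exact_mod_cast one_le_mseq (2 * j)
    calc |(mseq (2 * j) : ℝ)⁻¹| * |∑ i ∈ Finset.range d, f i k|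
        ≤ 1 * 1 := mul_le_mul h2 h1 (abs_nonneg _) (by norm_num)
      _ = 1 := by norm_num
  | comb d a j d' g ha hj hd' hG hs hinj ih =>
    intro k
    rw [Finsupp.finset_sum_apply]
    have habs : ∀ i ∈ Finset.range d,
        |((a i : ℝ) • ((mseq (2 * j i) : ℝ)⁻¹ •
          ∑ l ∈ Finset.range (d' i), g i l)) k| ≤ ((1 : ℝ) / 2) ^ (j i) := by
      intro i hi
      have hia : i < d := Finset.mem_range.1 hi
      simp only [Finsupp.smul_apply, smul_eq_mul, Finsupp.finset_sum_apply]
      rw [abs_mul, abs_mul]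
      have h1 : |(a i : ℝ)| ≤ 1 := by
        have hq : (a i) ^ 2 ≤ 1 :=
          le_trans (Finset.single_le_sum (f := fun i => (a i) ^ 2)
            (fun i _ => sq_nonneg _) hi) ha
        have hr : ((a i : ℝ)) ^ 2 ≤ 1 := by exact_mod_cast hq
        exact (sq_le_one_iff_abs_le_one _).1 hr
      have h2 : |((mseq (2 * j i) : ℝ))⁻¹| ≤ ((1 : ℝ) / 2) ^ (j i) := by
        rw [abs_inv, Nat.abs_cast]; exact mseq_inv_le (j i)
      have h3 : |∑ l ∈ Finset.range (d' i), g i l k| ≤ 1 :=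
        sum_abs_le_one (fun l hl => ih i l hia (Finset.mem_range.1 hl) k)
          (fun l hl l' hl' hne =>
            succ_disj (hs i hia) (Finset.mem_range.1 hl)
              (Finset.mem_range.1 hl') hne k)
      calc |(a i : ℝ)| * (|((mseq (2 * j i) : ℝ))⁻¹| *
            |∑ l ∈ Finset.range (d' i), g i l k|)
          ≤ 1 * (((1 : ℝ) / 2) ^ (j i) * 1) :=
            mul_le_mul h1 (mul_le_mul h2 h3 (abs_nonneg _) (by positivity))
              (by positivity) (by norm_num)
        _ = ((1 : ℝ) / 2) ^ (j i) := by ring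
    calc |∑ i ∈ Finset.range d, ((a i : ℝ) • ((mseq (2 * j i) : ℝ)⁻¹ •
            ∑ l ∈ Finset.range (d' i), g i l)) k|
        ≤ ∑ i ∈ Finset.range d, |((a i : ℝ) • ((mseq (2 * j i) : ℝ)⁻¹ •
            ∑ l ∈ Finset.range (d' i), g i l)) k| :=
          Finset.abs_sum_le_sum_abs _ _
      _ ≤ ∑ i ∈ Finset.range d, ((1 : ℝ) / 2) ^ (j i) :=
          Finset.sum_le_sum habs
      _ = ∑ t ∈ (Finset.range d).image j, ((1 : ℝ) / 2) ^ t := by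
          rw [Finset.sum_image]
          intro x hx y hy hxy
          by_contra hne
          exact hinj x y (Finset.mem_range.1 hx) (Finset.mem_range.1 hy) hne hxy
      _ ≤ 1 := geo_sum_le (by
          intro t ht
          obtain ⟨i, hi, rfl⟩ := Finset.mem_image.1 ht
          exact hj i (Finset.mem_range.1 hi))

/-- `G₀` is closed under restriction to arbitrary subsets `E ⊂ ℕ`;
consequently the unit vectors form a 1-unconditional basis of the completion
`𝔛_{G₀}` of `(c₀₀(ℕ), ‖·‖_{G₀})`, i.e. `‖Ex‖_{G₀} ≤ ‖x‖_{G₀}` for all `E` and `x`. -/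
theorem G0_restriction_closed_and_unconditional :
    (∀ f : ℕ →₀ ℝ, G0 f → ∀ (E : Set ℕ) (g : ℕ →₀ ℝ),
      (∀ k, g k = if k ∈ E then f k else 0) → G0 g) ∧
    (∀ (x : ℕ →₀ ℝ) (E : Set ℕ) (y : ℕ →₀ ℝ),
      (∀ k, y k = if k ∈ E then x k else 0) → normG0 y ≤ normG0 x) := by
  constructor
  · intro f hf E g hg
    have hge : g = f.filter (· ∈ E) := by
      ext k; rw [hg, Finsupp.filter_apply]
    rw [hge]
    exact G0_filter f hf _
  · intro x E y hy
    have hye : y = x.filter (· ∈ E) := by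
      ext k; rw [hy, Finsupp.filter_apply]
    have hdot : ∀ f : ℕ →₀ ℝ, dotp f y = dotp (f.filter (· ∈ E)) x := by
      intro f
      unfold dotp
      rw [hye, Finsupp.support_filter, Finset.sum_filter]
      apply Finset.sum_congr rfl
      intro k hk
      by_cases h : k ∈ E <;> simp [Finsupp.filter_apply, h]
    have hsub : {r : ℝ | ∃ f, G0 f ∧ r = |dotp f y|} ⊆
        {r : ℝ | ∃ f, G0 f ∧ r = |dotp f x|} := by
      rintro r ⟨f, hf, rfl⟩
      exact ⟨f.filter (· ∈ E), G0_filter f hf _, by rw [hdot]⟩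
    have hne : {r : ℝ | ∃ f, G0 f ∧ r = |dotp f y|}.Nonempty := by
      refine ⟨0, 0, G0_zero, ?_⟩
      simp [dotp]
    have hbdd : BddAbove {r : ℝ | ∃ f, G0 f ∧ r = |dotp f x|} := by
      refine ⟨∑ k ∈ x.support, |x k|, ?_⟩
      rintro r ⟨f, hf, rfl⟩
      calc |dotp f x| ≤ ∑ k ∈ x.support, |f k * x k| :=
            Finset.abs_sum_le_sum_abs _ _
        _ ≤ ∑ k ∈ x.support, |x k| := by
            apply Finset.sum_le_sum
            intro k _
            rw [abs_mul]
            calc |f k| * |x k| ≤ 1 * |x k| :=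
                  mul_le_mul_of_nonneg_right (G0_bound f hf k) (abs_nonneg _)
              _ = |x k| := one_mul _
    exact csSup_le_csSup hbdd hne hsub
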